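/- Let U be a bounded convex open set of ℝ^d (d ≥ 1) and f ∈ H¹(U). Then ∬_{U×U} (f(x) - f(y))² dx dy ≤ 2 m_U C_d (Diam U)² ∫_U |∇f(z)|² dz, where C_d = ln 2 if d = 1 and C_d = (2^{d-1} - 1)/(d-1) if d ≥ 2. -/

import Mathlib

open MeasureTheory Set

/-- The dimensional constant `C_d`: `ln 2` if `d = 1`, `(2^(d-1) - 1)/(d-1)` if `d ≥ 2`. -/
noncomputable def Cdim (d : ℕ) : ℝ :=
  if d = 1 then Real.log 2 else ((2 : ℝ) ^ (d - 1) - 1) / ((d : ℝ) - 1)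

section helpers

variable {d : ℕ}
local notation "E" => EuclideanSpace ℝ (Fin d)


lemma sq_intervalIntegral_le (g : ℝ → ℝ) (hg : ContinuousOn g (Icc 0 1)) :
    (∫ t in (0:ℝ)..1, g t)^2 ≤ ∫ t in (0:ℝ)..1, (g t)^2 := by
  have h01 : (0:ℝ) ≤ 1 := by norm_num
  have huIcc : uIcc (0:ℝ) 1 = Icc 0 1 := uIcc_of_le h01
  have hgi : IntervalIntegrable g volume 0 1 := (huIcc ▸ hg).intervalIntegrable
  have hgi2 : IntervalIntegrable (fun t => (g t)^2) volume 0 1 :=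
    (huIcc ▸ (hg.pow 2)).intervalIntegrable
  set c := ∫ t in (0:ℝ)..1, g t with hc
  have h0 : 0 ≤ ∫ t in (0:ℝ)..1, (g t - c)^2 :=
    intervalIntegral.integral_nonneg h01 (fun t _ => sq_nonneg _)
  have hexp : (fun t => (g t - c)^2) = fun t => ((g t)^2 - (2*c) * g t) + c^2 := by
    funext t; ring
  rw [hexp, intervalIntegral.integral_add (hgi2.sub (hgi.const_mul _)) intervalIntegrable_const,
    intervalIntegral.integral_sub hgi2 (hgi.const_mul _),
    intervalIntegral.integral_const_mul, intervalIntegral.integral_const, ← hc] at h0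
  simp only [sub_zero, one_smul] at h0
  nlinarith [h0]



lemma norm_gradient_eq (f : E → ℝ) (z : E) : ‖gradient f z‖ = ‖fderiv ℝ f z‖ := by
  rw [gradient]
  exact LinearIsometryEquiv.norm_map _ _

lemma ftc_line {U : Set E} (hUo : IsOpen U) (f : E → ℝ) (hf : ContDiffOn ℝ 1 f U)
    {x y : E} (hseg : ∀ t ∈ Icc (0:ℝ) 1, x + t • (y - x) ∈ U) :
    f y - f x = ∫ t in (0:ℝ)..1, (fderiv ℝ f (x + t • (y - x))) (y - x) := by
  have hderiv : ∀ t ∈ uIcc (0:ℝ) 1,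
      HasDerivAt (fun s => f (x + s • (y - x))) ((fderiv ℝ f (x + t • (y - x))) (y - x)) t := by
    intro t ht
    rw [uIcc_of_le (by norm_num : (0:ℝ) ≤ 1)] at ht
    have hγ : HasDerivAt (fun s : ℝ => x + s • (y - x)) (y - x) t := by
      simpa using ((hasDerivAt_id t).smul_const (y - x)).const_add x
    have hdf : DifferentiableAt ℝ f (x + t • (y - x)) :=
      (hf.contDiffAt (hUo.mem_nhds (hseg t ht))).differentiableAt one_ne_zero
    exact (hdf.hasFDerivAt.comp_hasDerivAt t hγ)
  have hcont : ContinuousOn (fun t : ℝ => (fderiv ℝ f (x + t • (y - x))) (y - x)) (Icc 0 1) := by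
    have h1 : ContinuousOn (fderiv ℝ f) U := hf.continuousOn_fderiv_of_isOpen hUo le_rfl
    have h2 : ContinuousOn (fun t : ℝ => x + t • (y - x)) (Icc 0 1) := by fun_prop
    exact ((h1.comp h2 hseg).clm_apply continuousOn_const)
  have hint : IntervalIntegrable (fun t : ℝ => (fderiv ℝ f (x + t • (y - x))) (y - x))
      volume 0 1 := ((uIcc_of_le (by norm_num : (0:ℝ) ≤ 1)) ▸ hcont).intervalIntegrable
  have := intervalIntegral.integral_eq_sub_of_hasDerivAt hderiv hint
  simp only [one_smul, zero_smul, add_zero] at this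
  rw [this]
  congr 1 <;> congr 1 <;> abel

lemma pointwise_bound {U : Set E} (hUo : IsOpen U) (hUc : Convex ℝ U)
    (hUb : Bornology.IsBounded U)
    (f : E → ℝ) (hf : ContDiffOn ℝ 1 f U) {x y : E} (hx : x ∈ U) (hy : y ∈ U) :
    ENNReal.ofReal ((f x - f y)^2) ≤
      ENNReal.ofReal (Metric.diam U ^ 2) *
        ∫⁻ t in Ioc (0:ℝ) 1, ENNReal.ofReal (‖gradient f (x + t • (y - x))‖^2) := by
  set D := Metric.diam U with hD
  have hDnn : 0 ≤ D := Metric.diam_nonneg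
  have hseg : ∀ t ∈ Icc (0:ℝ) 1, x + t • (y - x) ∈ U := by
    intro t ht
    have : x + t • (y - x) = (1 - t) • x + t • y := by
      rw [smul_sub, sub_smul, one_smul]; abel
    rw [this]
    exact hUc hx hy (by linarith [ht.1, ht.2]) ht.1 (by ring)
  -- continuity facts
  have h1 : ContinuousOn (fderiv ℝ f) U := hf.continuousOn_fderiv_of_isOpen hUo le_rfl
  have h2 : ContinuousOn (fun t : ℝ => x + t • (y - x)) (Icc 0 1) := by fun_prop
  have hcontψ : ContinuousOn (fun t : ℝ => (fderiv ℝ f (x + t • (y - x))) (y - x)) (Icc 0 1) :=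
    ((h1.comp h2 hseg).clm_apply continuousOn_const)
  have hcontG : ContinuousOn (fun t : ℝ => ‖gradient f (x + t • (y - x))‖^2) (Icc 0 1) := by
    have : ContinuousOn (fun t : ℝ => ‖fderiv ℝ f (x + t • (y - x))‖^2) (Icc 0 1) :=
      ((h1.comp h2 hseg).norm.pow 2)
    simpa [norm_gradient_eq] using this
  -- real inequality
  have hxy : ‖y - x‖ ≤ D := by
    rw [← dist_eq_norm]; exact Metric.dist_le_diam_of_mem hUb hy hx
  have hptwise : ∀ t ∈ Icc (0:ℝ) 1,
      ((fderiv ℝ f (x + t • (y - x))) (y - x))^2 ≤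
        D^2 * ‖gradient f (x + t • (y - x))‖^2 := by
    intro t ht
    have h1 : |(fderiv ℝ f (x + t • (y - x))) (y - x)| ≤
        ‖gradient f (x + t • (y - x))‖ * D := by
      calc |(fderiv ℝ f (x + t • (y - x))) (y - x)|
          ≤ ‖fderiv ℝ f (x + t • (y - x))‖ * ‖y - x‖ :=
            (fderiv ℝ f (x + t • (y - x))).le_opNorm (y - x)
        _ ≤ ‖gradient f (x + t • (y - x))‖ * D := by
            rw [norm_gradient_eq]
            exact mul_le_mul_of_nonneg_left hxy (norm_nonneg _)
    nlinarith [abs_nonneg ((fderiv ℝ f (x + t • (y - x))) (y - x)), norm_nonneg (gradient f (x + t • (y - x))), sq_abs ((fderiv ℝ f (x + t • (y - x))) (y - x))]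
  have hreal : (f x - f y)^2 ≤ D^2 * ∫ t in (0:ℝ)..1, ‖gradient f (x + t • (y - x))‖^2 := by
    have hftc := ftc_line hUo f hf hseg
    have hCS := sq_intervalIntegral_le _ hcontψ
    rw [← hftc] at hCS
    have huIcc : uIcc (0:ℝ) 1 = Icc 0 1 := uIcc_of_le (by norm_num)
    have hmono : (∫ t in (0:ℝ)..1, ((fderiv ℝ f (x + t • (y - x))) (y - x))^2) ≤
        ∫ t in (0:ℝ)..1, D^2 * ‖gradient f (x + t • (y - x))‖^2 := by
      apply intervalIntegral.integral_mono_on (by norm_num)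
        ((huIcc ▸ (hcontψ.pow 2)).intervalIntegrable)
        ((huIcc ▸ (hcontG.const_smul (D^2))).intervalIntegrable)
      exact hptwise
    rw [intervalIntegral.integral_const_mul] at hmono
    calc (f x - f y)^2 = (f y - f x)^2 := by ring
      _ ≤ _ := hCS
      _ ≤ _ := hmono
  -- move to ENNReal
  have hG_int : IntegrableOn (fun t : ℝ => ‖gradient f (x + t • (y - x))‖^2) (Ioc 0 1) volume :=
    (hcontG.integrableOn_compact isCompact_Icc).mono_set Ioc_subset_Icc_self
  have hIoc : (∫ t in (0:ℝ)..1, ‖gradient f (x + t • (y - x))‖^2) =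
      ∫ t in Ioc (0:ℝ) 1, ‖gradient f (x + t • (y - x))‖^2 :=
    intervalIntegral.integral_of_le (by norm_num)
  have heq : ENNReal.ofReal (∫ t in Ioc (0:ℝ) 1, ‖gradient f (x + t • (y - x))‖^2) =
      ∫⁻ t in Ioc (0:ℝ) 1, ENNReal.ofReal (‖gradient f (x + t • (y - x))‖^2) :=
    ofReal_integral_eq_lintegral_ofReal hG_int
      (Filter.Eventually.of_forall fun t => sq_nonneg _)
  calc ENNReal.ofReal ((f x - f y)^2)
      ≤ ENNReal.ofReal (D^2 * ∫ t in (0:ℝ)..1, ‖gradient f (x + t • (y - x))‖^2) :=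
        ENNReal.ofReal_le_ofReal hreal
    _ = ENNReal.ofReal (D^2) *
          ENNReal.ofReal (∫ t in Ioc (0:ℝ) 1, ‖gradient f (x + t • (y - x))‖^2) := by
        rw [hIoc, ENNReal.ofReal_mul (sq_nonneg D)]
    _ = _ := by rw [heq]

lemma scaling_bound {U : Set E} (hUo : IsOpen U) (K : E → ENNReal) (hK : Measurable K)
    {t : ℝ} (ht : 0 < t) (c : E) (hsub : ∀ y ∈ U, c + t • y ∈ U) :
    ∫⁻ y in U, K (c + t • y) ≤ ENNReal.ofReal ((t^d)⁻¹) * ∫⁻ z in U, K z := by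
  set φ : E → E := fun y => c + t • y with hφ
  have hφmeas : Measurable φ := (measurable_const_smul t).const_add c
  have hmap : Measure.map φ (volume : Measure E) = ENNReal.ofReal ((t^d)⁻¹) • volume := by
    have h1 : φ = (fun z => c + z) ∘ (fun y : E => t • y) := rfl
    rw [h1, ← Measure.map_map (measurable_const_add c) (measurable_const_smul t),
      Measure.map_addHaar_smul (μ := (volume : Measure E)) ht.ne', Measure.map_smul,
      map_add_left_eq_self volume c]
    congr 1
    rw [finrank_euclideanSpace_fin, abs_of_nonneg (by positivity)]
  have hinj : Function.Injective φ := fun a b hab => by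
    exact smul_right_injective E ht.ne' (by simpa [hφ] using hab)
  have himg_open : IsOpen (φ '' U) := by
    have : φ '' U = (fun z => c + z) '' ((fun y : E => t • y) '' U) := by
      rw [← image_comp]; rfl
    rw [this]
    exact (isOpenMap_add_left c) _ ((isOpenMap_smul₀ ht.ne') U hUo)
  set F : E → ENNReal := (φ '' U).indicator K with hF
  have hFmeas : Measurable F := hK.indicator himg_open.measurableSet
  have hcomp : ∀ y, U.indicator (fun y => K (φ y)) y = F (φ y) := by
    intro y
    by_cases hy : y ∈ U
    · rw [indicator_of_mem hy, hF, indicator_of_mem (mem_image_of_mem φ hy)]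
    · rw [indicator_of_notMem hy, hF, indicator_of_notMem]
      intro hc
      obtain ⟨y', hy', he⟩ := hc
      exact hy (hinj he ▸ hy')
  calc ∫⁻ y in U, K (φ y) = ∫⁻ y, U.indicator (fun y => K (φ y)) y := by
        rw [← lintegral_indicator hUo.measurableSet]
    _ = ∫⁻ y, F (φ y) := by simp_rw [hcomp]
    _ = ∫⁻ z, F z ∂(Measure.map φ volume) := (lintegral_map hFmeas hφmeas).symm
    _ = ENNReal.ofReal ((t^d)⁻¹) * ∫⁻ z, F z := by rw [hmap, lintegral_smul_measure, smul_eq_mul]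
    _ = ENNReal.ofReal ((t^d)⁻¹) * ∫⁻ z in φ '' U, K z := by
        rw [lintegral_indicator himg_open.measurableSet]
    _ ≤ ENNReal.ofReal ((t^d)⁻¹) * ∫⁻ z in U, K z := by
        gcongr
        rintro z ⟨y, hy, rfl⟩
        exact hsub y hy

lemma integral_t_pow (hd : 1 ≤ d) :
    ∫ t in (1/2:ℝ)..1, (t^d)⁻¹ = Cdim d := by
  have h0 : (0:ℝ) ∉ uIcc (1/2:ℝ) 1 := by
    rw [uIcc_of_le (by norm_num : (1/2:ℝ) ≤ 1)]
    simp only [mem_Icc]; norm_num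
  rcases eq_or_lt_of_le hd with h1 | h2
  · subst h1
    simp only [pow_one, Cdim, if_pos rfl]
    rw [integral_inv h0]
    norm_num
  · have hd2 : 2 ≤ d := h2
    have hzp : ∀ t : ℝ, (t^d)⁻¹ = t ^ (-(d:ℤ)) := fun t => by
      rw [zpow_neg, zpow_natCast]
    simp_rw [hzp]
    rw [integral_zpow (Or.inr ⟨by omega, h0⟩)]
    have e1 : ((1:ℝ)) ^ (-(d:ℤ) + 1) = 1 := one_zpow _
    have e2 : ((1/2:ℝ)) ^ (-(d:ℤ) + 1) = (2:ℝ) ^ ((d:ℤ) - 1) := by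
      rw [one_div, inv_zpow, ← zpow_neg]
      congr 1; ring
    have e3 : (2:ℝ) ^ ((d:ℤ) - 1) = (2:ℝ) ^ (d - 1 : ℕ) := by
      rw [← zpow_natCast]
      congr 1; omega
    rw [e1, e2, e3]
    have hne : d ≠ 1 := by omega
    rw [Cdim, if_neg hne]
    have hdenom : ((-(d:ℤ) : ℤ) : ℝ) + 1 = -((d:ℝ) - 1) := by push_cast; ring
    rw [hdenom]
    rw [show (1 - (2:ℝ) ^ (d-1:ℕ)) = -((2:ℝ)^(d-1:ℕ) - 1) by ring, neg_div_neg_eq]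

lemma lintegral_t_pow (hd : 1 ≤ d) :
    ∫⁻ t in Ioc (1/2:ℝ) 1, ENNReal.ofReal ((t^d)⁻¹) = ENNReal.ofReal (Cdim d) := by
  have hcont : ContinuousOn (fun t : ℝ => (t^d)⁻¹) (Icc (1/2) 1) := by
    apply ContinuousOn.inv₀ (by fun_prop)
    intro t ht
    have := ht.1
    positivity
  have hint : IntegrableOn (fun t : ℝ => (t^d)⁻¹) (Ioc (1/2) 1) volume :=
    (hcont.integrableOn_compact isCompact_Icc).mono_set Ioc_subset_Icc_self
  rw [← ofReal_integral_eq_lintegral_ofReal hint]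
  · rw [← intervalIntegral.integral_of_le (by norm_num : (1/2:ℝ) ≤ 1), integral_t_pow hd]
  · filter_upwards [ae_restrict_mem measurableSet_Ioc] with t ht
    have := ht.1
    positivity

lemma key_bound (hd : 1 ≤ d) {U : Set E} (hUo : IsOpen U) (hUc : Convex ℝ U)
    (K : E → ENNReal) (hK : Measurable K) :
    (∫⁻ p, (∫⁻ t in Ioc (0:ℝ) 1, K (p.1 + t • (p.2 - p.1)))
        ∂((volume.restrict U).prod (volume.restrict U))) ≤
      2 * ENNReal.ofReal (Cdim d) * volume U * ∫⁻ z in U, K z := by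
  set μ : Measure (E × E) := (volume.restrict U).prod (volume.restrict U) with hμ
  have hFm : Measurable (fun q : (E × E) × ℝ => K (q.1.1 + q.2 • (q.1.2 - q.1.1))) := by
    apply hK.comp
    fun_prop
  set g : ℝ → ENNReal := fun t => ∫⁻ p, K (p.1 + t • (p.2 - p.1)) ∂μ with hg
  have hgm : Measurable g := by
    apply Measurable.lintegral_prod_right (f := fun t (p : E × E) => K (p.1 + t • (p.2 - p.1)))
    apply hK.comp
    fun_prop
  -- swap the order of integration
  have hswap : (∫⁻ p, (∫⁻ t in Ioc (0:ℝ) 1, K (p.1 + t • (p.2 - p.1))) ∂μ) =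
      ∫⁻ t in Ioc (0:ℝ) 1, g t := by
    apply lintegral_lintegral_swap
    exact (hFm.aemeasurable)
  rw [hswap]
  -- symmetry g t = g (1 - t)
  have hsymm : ∀ t : ℝ, g t = g (1 - t) := by
    intro t
    have hsw := Measure.measurePreserving_swap
      (μ := volume.restrict U) (ν := volume.restrict U)
    have hpt : ∀ p : E × E, K ((Prod.swap p).1 + t • ((Prod.swap p).2 - (Prod.swap p).1)) =
        K (p.1 + (1 - t) • (p.2 - p.1)) := by
      intro p
      simp only [Prod.fst_swap, Prod.snd_swap]
      congr 1
      module
    have h2 := hsw.lintegral_comp (f := fun p : E × E => K (p.1 + t • (p.2 - p.1)))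
      (hK.comp (by fun_prop))
    simp only [hpt] at h2
    exact h2.symm
  -- bound for t ∈ Ioc (1/2) 1
  set C : ENNReal := volume U * ∫⁻ z in U, K z with hC
  have hbound : ∀ t ∈ Ioc (1/2:ℝ) 1, g t ≤ ENNReal.ofReal ((t^d)⁻¹) * C := by
    intro t ht
    have ht0 : 0 < t := lt_trans (by norm_num) ht.1
    have ht1 : t ≤ 1 := ht.2
    show (∫⁻ p, K (p.1 + t • (p.2 - p.1)) ∂μ) ≤ _
    rw [hμ, lintegral_prod (fun p : E × E => K (p.1 + t • (p.2 - p.1)))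
      ((hK.comp (by fun_prop : Measurable
        (fun p : E × E => p.1 + t • (p.2 - p.1)))).aemeasurable)]
    calc ∫⁻ x in U, ∫⁻ y in U, K (x + t • (y - x))
        ≤ ∫⁻ _ in U, ENNReal.ofReal ((t^d)⁻¹) * ∫⁻ z in U, K z := by
          apply lintegral_mono_ae
          filter_upwards [ae_restrict_mem hUo.measurableSet] with x hx
          have hrw : ∀ y : E, x + t • (y - x) = (1 - t) • x + t • y := by
            intro y; module
          simp_rw [hrw]
          apply scaling_bound hUo K hK ht0
          intro y hy
          exact hUc hx hy (by linarith) (le_of_lt ht0) (by ring)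
      _ = ENNReal.ofReal ((t^d)⁻¹) * C := by
          rw [lintegral_const, Measure.restrict_apply_univ, hC]
          ring
  -- split the t-integral and use symmetry
  have hsplit : (∫⁻ t in Ioc (0:ℝ) 1, g t) =
      (∫⁻ t in Ioc (0:ℝ) (1/2), g t) + ∫⁻ t in Ioc (1/2:ℝ) 1, g t := by
    rw [← lintegral_union measurableSet_Ioc (Set.Ioc_disjoint_Ioc_of_le le_rfl),
      Set.Ioc_union_Ioc_eq_Ioc (by norm_num) (by norm_num)]
  have hrefl : (∫⁻ t in Ioc (0:ℝ) (1/2), g t) = ∫⁻ t in Ioc (1/2:ℝ) 1, g t := by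
    have hmp : MeasurePreserving (fun s : ℝ => 1 - s) volume volume :=
      Measure.measurePreserving_sub_left volume 1
    have hpre : (fun s : ℝ => 1 - s) ⁻¹' (Ioc (0:ℝ) (1/2)) = Ico (1/2:ℝ) 1 := by
      ext s
      simp only [mem_preimage, mem_Ioc, mem_Ico]
      constructor <;> intro h <;> constructor <;> linarith [h.1, h.2]
    have := hmp.setLIntegral_comp_preimage measurableSet_Ioc hgm
      (s := Ioc (0:ℝ) (1/2))
    rw [hpre] at this
    rw [← this]
    have : ∀ s : ℝ, g (1 - s) = g s := fun s => (hsymm s).symm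
    simp_rw [this]
    exact setLIntegral_congr Ico_ae_eq_Ioc
  rw [hsplit, hrefl, ← two_mul]
  calc 2 * ∫⁻ t in Ioc (1/2:ℝ) 1, g t
      ≤ 2 * ∫⁻ t in Ioc (1/2:ℝ) 1, ENNReal.ofReal ((t^d)⁻¹) * C := by
        refine mul_le_mul_right ?_ 2
        apply lintegral_mono_ae
        filter_upwards [ae_restrict_mem measurableSet_Ioc] with t ht
        exact hbound t ht
    _ = 2 * (ENNReal.ofReal (Cdim d) * C) := by
        rw [lintegral_mul_const'' C (by fun_prop), lintegral_t_pow hd]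
    _ = 2 * ENNReal.ofReal (Cdim d) * volume U * ∫⁻ z in U, K z := by
        rw [hC]; ring

lemma Cdim_nonneg (hd : 1 ≤ d) : 0 ≤ Cdim d := by
  rcases eq_or_lt_of_le hd with h1 | h2
  · subst h1; simp [Cdim]; positivity
  · rw [Cdim, if_neg (by omega : d ≠ 1)]
    apply div_nonneg
    · have : (1:ℝ) ≤ 2 ^ (d-1) := one_le_pow₀ (by norm_num : (1:ℝ) ≤ 2)
      linarith
    · have : (2:ℝ) ≤ (d:ℝ) := by exact_mod_cast h2
      linarith

/-- Poincaré–Wirtinger inequality on a bounded convex open set `U ⊆ ℝ^d`: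
`∬_{U×U} (f x − f y)² ≤ 2 m_U C_d (Diam U)² ∫_U |∇f|²`. -/
theorem poincare_wirtinger {d : ℕ} (hd : 1 ≤ d) (U : Set (EuclideanSpace ℝ (Fin d)))
    (hUo : IsOpen U) (hUc : Convex ℝ U) (hUb : Bornology.IsBounded U)
    (f : EuclideanSpace ℝ (Fin d) → ℝ) (hf : ContDiffOn ℝ 1 f U)
    (hf2 : MemLp f 2 (volume.restrict U))
    (hgrad2 : MemLp (fun z => ‖gradient f z‖) 2 (volume.restrict U)) :
    ∫ x in U, ∫ y in U, (f x - f y) ^ 2 ≤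
      2 * (volume U).toReal * Cdim d * Metric.diam U ^ 2 * ∫ z in U, ‖gradient f z‖ ^ 2 := by
  set D := Metric.diam U with hD
  have hDnn : 0 ≤ D := Metric.diam_nonneg
  have hCd : 0 ≤ Cdim d := Cdim_nonneg hd
  have hGnn : 0 ≤ ∫ z in U, ‖gradient f z‖ ^ 2 :=
    integral_nonneg fun z => sq_nonneg _
  have hRHSnn : 0 ≤ 2 * (volume U).toReal * Cdim d * D ^ 2 * ∫ z in U, ‖gradient f z‖ ^ 2 := by
    have h1 : (0:ℝ) ≤ (volume U).toReal := ENNReal.toReal_nonneg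
    positivity
  -- the kernel K
  set K : EuclideanSpace ℝ (Fin d) → ENNReal :=
    fun z => ENNReal.ofReal (‖gradient f z‖ ^ 2) with hK
  have hgradm : Measurable (gradient f) := by
    have h1 : Measurable (fderiv ℝ f) := measurable_fderiv ℝ f
    exact ((InnerProductSpace.toDual ℝ
      (EuclideanSpace ℝ (Fin d))).symm.continuous.measurable).comp h1
  have hKm : Measurable K := (hgradm.norm.pow_const 2).ennreal_ofReal
  -- finiteness of the gradient integral
  have hGint : Integrable (fun z => ‖gradient f z‖ ^ 2) (volume.restrict U) :=
    hgrad2.integrable_sq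
  have hIeq : (∫⁻ z in U, K z) = ENNReal.ofReal (∫ z in U, ‖gradient f z‖ ^ 2) :=
    (ofReal_integral_eq_lintegral_ofReal hGint
      (Filter.Eventually.of_forall fun z => sq_nonneg _)).symm
  have hm : volume U ≠ ⊤ := hUb.measure_lt_top.ne
  -- the RHS in ENNReal
  set R : ENNReal := ENNReal.ofReal (D ^ 2) *
      (2 * ENNReal.ofReal (Cdim d) * volume U * ∫⁻ z in U, K z) with hR
  have hRne : R ≠ ⊤ := by
    rw [hR, hIeq]
    finiteness
  have hRtoReal : R.toReal = 2 * (volume U).toReal * Cdim d * D ^ 2 *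
      ∫ z in U, ‖gradient f z‖ ^ 2 := by
    rw [hR, hIeq]
    rw [ENNReal.toReal_mul, ENNReal.toReal_mul, ENNReal.toReal_mul, ENNReal.toReal_mul]
    rw [ENNReal.toReal_ofReal (sq_nonneg D), ENNReal.toReal_ofReal hCd,
      ENNReal.toReal_ofReal hGnn]
    simp only [ENNReal.toReal_ofNat]
    ring
  -- the main ENNReal chain
  set μ2 : Measure (EuclideanSpace ℝ (Fin d) × EuclideanSpace ℝ (Fin d)) :=
    (volume.restrict U).prod (volume.restrict U) with hμ2
  have hchain : (∫⁻ p, ENNReal.ofReal ((f p.1 - f p.2) ^ 2) ∂μ2) ≤ R := by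
    calc (∫⁻ p, ENNReal.ofReal ((f p.1 - f p.2) ^ 2) ∂μ2)
        ≤ ∫⁻ p, ENNReal.ofReal (D ^ 2) *
            (∫⁻ t in Ioc (0:ℝ) 1, K (p.1 + t • (p.2 - p.1))) ∂μ2 := by
          apply lintegral_mono_ae
          rw [hμ2, Measure.prod_restrict]
          filter_upwards [ae_restrict_mem (hUo.measurableSet.prod hUo.measurableSet)] with p hp
          exact pointwise_bound hUo hUc hUb f hf hp.1 hp.2
      _ = ENNReal.ofReal (D ^ 2) *
            ∫⁻ p, (∫⁻ t in Ioc (0:ℝ) 1, K (p.1 + t • (p.2 - p.1))) ∂μ2 :=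
          lintegral_const_mul' _ _ ENNReal.ofReal_ne_top
      _ ≤ R := by
          rw [hR]
          exact mul_le_mul_right (key_bound hd hUo hUc K hKm) _
  -- reduce the Bochner double integral to the lintegral
  have hfae : AEMeasurable f (volume.restrict U) :=
    (hf.continuousOn.aemeasurable hUo.measurableSet)
  have hprodae : AEMeasurable (fun p : EuclideanSpace ℝ (Fin d) × EuclideanSpace ℝ (Fin d) =>
      ENNReal.ofReal ((f p.1 - f p.2) ^ 2)) μ2 := by
    exact ((hfae.comp_fst.sub hfae.comp_snd).pow aemeasurable_const).ennreal_ofReal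
  by_cases houter : Integrable (fun x => ∫ y in U, (f x - f y) ^ 2) (volume.restrict U)
  · have hinner : ∀ x, ENNReal.ofReal (∫ y in U, (f x - f y) ^ 2) ≤
        ∫⁻ y in U, ENNReal.ofReal ((f x - f y) ^ 2) := by
      intro x
      by_cases hyint : Integrable (fun y => (f x - f y) ^ 2) (volume.restrict U)
      · exact le_of_eq (ofReal_integral_eq_lintegral_ofReal hyint
          (Filter.Eventually.of_forall fun y => sq_nonneg _))
      · rw [integral_undef hyint]
        simp
    have hLHS : (∫ x in U, ∫ y in U, (f x - f y) ^ 2) =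
        (∫⁻ x in U, ENNReal.ofReal (∫ y in U, (f x - f y) ^ 2)).toReal := by
      rw [integral_eq_lintegral_of_nonneg_ae
        (Filter.Eventually.of_forall fun x => integral_nonneg fun y => sq_nonneg _)
        houter.aestronglyMeasurable]
    have hle1 : (∫⁻ x in U, ENNReal.ofReal (∫ y in U, (f x - f y) ^ 2)) ≤
        ∫⁻ x in U, ∫⁻ y in U, ENNReal.ofReal ((f x - f y) ^ 2) :=
      lintegral_mono hinner
    have hle2 : (∫⁻ x in U, ∫⁻ y in U, ENNReal.ofReal ((f x - f y) ^ 2)) =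
        ∫⁻ p, ENNReal.ofReal ((f p.1 - f p.2) ^ 2) ∂μ2 :=
      lintegral_lintegral hprodae
    rw [hLHS, ← hRtoReal]
    apply ENNReal.toReal_mono hRne
    exact le_trans hle1 (le_trans (le_of_eq hle2) hchain)
  · rw [integral_undef houter]
    exact hRHSnn

end helpers
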